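/- Let h : [0,∞) → ℝ be continuous with a finite limit h(∞) = lim_{t→∞} h(t), and let x : [0,∞) → ℝ be differentiable with ẋ(t) = x(t)²/2 + h(t) for all t ≥ 0. If the trajectory {x(t) : t ≥ 0} is bounded, then h(∞) ≤ 0, the limit x(∞) = lim_{t→∞} x(t) exists in ℝ, and x(∞)²/2 + h(∞) = 0. -/

import Mathlib

open Filter Topology

/-- If the derivative is bounded below by `c` on `[T, ∞)`, the function grows linearly. -/
lemma grow17 (x g : ℝ → ℝ) (T c : ℝ)
    (hd : ∀ t, T ≤ t → HasDerivAt x (g t) t) (hg : ∀ t, T ≤ t → c ≤ g t) :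
    ∀ s, T ≤ s → x T + c * (s - T) ≤ x s := by
  intro s hs
  have hmono : MonotoneOn (fun t => x t - c * t) (Set.Ici T) := by
    apply monotoneOn_of_deriv_nonneg (convex_Ici T)
    · intro t ht
      exact ((hd t ht).sub ((hasDerivAt_id t).const_mul c)).continuousAt.continuousWithinAt
    · intro t ht
      rw [interior_Ici] at ht
      exact ((hd t (le_of_lt ht)).sub
        ((hasDerivAt_id t).const_mul c)).differentiableAt.differentiableWithinAt
    · intro t ht
      rw [interior_Ici] at ht
      have hder : HasDerivAt (fun t => x t - c * t) (g t - c) t := by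
        exact ((hd t (le_of_lt ht)).sub ((hasDerivAt_id' t).const_mul c)).congr_deriv (by ring)
      rw [hder.deriv]
      have := hg t (le_of_lt ht)
      linarith
  have := hmono (Set.self_mem_Ici) (Set.mem_Ici.2 hs) hs
  simp only at this
  nlinarith

/-- A bounded function cannot have derivative eventually bounded below by a positive
constant. -/
lemma nogrow17 (x g : ℝ → ℝ) (C T c : ℝ) (hc : 0 < c) (hT : 0 ≤ T)
    (hbdd : ∀ t, 0 ≤ t → |x t| ≤ C)
    (hd : ∀ t, T ≤ t → HasDerivAt x (g t) t) (hg : ∀ t, T ≤ t → c ≤ g t) : False := by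
  have hC0 : 0 ≤ C := (abs_nonneg _).trans (hbdd T hT)
  set s := T + (2 * C + 1) / c with hs_def
  have hds : 0 ≤ (2 * C + 1) / c := div_nonneg (by linarith) hc.le
  have hs : T ≤ s := by simp [hs_def]; linarith
  have h1 := grow17 x g T c hd hg s hs
  have h2 := abs_le.1 (hbdd s (hT.trans hs))
  have h3 := abs_le.1 (hbdd T hT)
  have h4 : c * (s - T) = 2 * C + 1 := by
    rw [hs_def, add_sub_cancel_left]
    field_simp [hc.ne']
  linarith [h1, h2.2, h3.1]

/-- If `x` crosses level `c` infinitely often in both directions, but the derivative of `x`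
is positive whenever `x t = c` (for `t ≥ T`), we get a contradiction. -/
lemma cross17 (x g : ℝ → ℝ) (c T : ℝ)
    (hd : ∀ t, T ≤ t → HasDerivAt x (g t) t)
    (hpos : ∀ t, T ≤ t → x t = c → 0 < g t)
    (habove : ∃ᶠ t in atTop, c < x t)
    (hbelow : ∃ᶠ t in atTop, x t < c) : False := by
  obtain ⟨t1, hx1, ht1T⟩ := (habove.and_eventually (eventually_ge_atTop T)).exists
  obtain ⟨t2, hx2, ht2⟩ := (hbelow.and_eventually (eventually_ge_atTop (t1 + 1))).exists
  have ht12 : t1 < t2 := by linarith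
  have hcx : ContinuousOn x (Set.Icc t1 t2) := fun t ht =>
    ((hd t (ht1T.trans ht.1)).continuousAt).continuousWithinAt
  set S := Set.Icc t1 t2 ∩ x ⁻¹' {c} with hS_def
  have hS_ne : S.Nonempty := by
    obtain ⟨t, htmem, htc⟩ := intermediate_value_Icc' ht12.le hcx ⟨hx2.le, hx1.le⟩
    exact ⟨t, htmem, htc⟩
  have hS_bdd : BddAbove S := ⟨t2, fun t ht => ht.1.2⟩
  have hS_closed : IsClosed S :=
    hcx.preimage_isClosed_of_isClosed isClosed_Icc isClosed_singleton
  set s := sSup S with hs_def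
  have hsS : s ∈ S := hS_closed.csSup_mem hS_ne hS_bdd
  have hs1 : t1 ≤ s := hsS.1.1
  have hs2 : s ≤ t2 := hsS.1.2
  have hxs : x s = c := hsS.2
  have hst2 : s < t2 := lt_of_le_of_ne hs2 (fun he => hx2.ne (he ▸ hxs))
  have hlt : ∀ t, s < t → t ≤ t2 → x t < c := by
    intro t hst ht2'
    by_contra hge
    push_neg at hge
    rcases eq_or_lt_of_le hge with he | hlt'
    · exact absurd (le_csSup hS_bdd ⟨⟨hs1.trans hst.le, ht2'⟩, he.symm⟩) (not_le.2 hst)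
    · have hcx2 : ContinuousOn x (Set.Icc t t2) :=
        hcx.mono (Set.Icc_subset_Icc (hs1.trans hst.le) le_rfl)
      obtain ⟨u, humem, huc⟩ := intermediate_value_Icc' ht2' hcx2 ⟨hx2.le, hlt'.le⟩
      have : u ≤ s := le_csSup hS_bdd ⟨⟨hs1.trans (hst.le.trans humem.1), humem.2⟩, huc⟩
      linarith [humem.1]
  have hgs : 0 < g s := hpos s (ht1T.trans hs1) hxs
  have hslope := hasDerivAt_iff_tendsto_slope.1 (hd s (ht1T.trans hs1))
  have hle : 𝓝[>] s ≤ 𝓝[≠] s :=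
    nhdsWithin_mono s (fun y hy => ne_of_gt hy)
  have hev : ∀ᶠ t in 𝓝[>] s, 0 < slope x s t :=
    (hslope.mono_left hle).eventually (eventually_gt_nhds hgs)
  have hmem : Set.Ioc s t2 ∈ 𝓝[>] s := Ioc_mem_nhdsGT_of_mem ⟨le_rfl, hst2⟩
  obtain ⟨t, hslopet, htmem⟩ := (hev.and (eventually_of_mem hmem (fun y hy => hy))).exists
  rw [slope_def_field] at hslopet
  have h1 : x t < x s := hxs ▸ hlt t htmem.1 htmem.2
  have h2 : 0 < t - s := sub_pos.2 htmem.1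
  rcases div_pos_iff.1 hslopet with ⟨ha, hb⟩ | ⟨ha, hb⟩ <;> linarith

/-- for the scalar ODE `ẋ = x²/2 + h(t)` with `h` continuous on `[0,∞)` and
`h(t) → L ∈ ℝ`, if the trajectory of `x` is bounded then `L ≤ 0`, `x(t)` converges to a
real limit `x(∞)`, and `x(∞)²/2 + L = 0`. -/
theorem stmt17 (h x : ℝ → ℝ) (L : ℝ)
    (hcont : ContinuousOn h (Set.Ici (0 : ℝ)))
    (hlim : Tendsto h atTop (nhds L))
    (hode : ∀ t : ℝ, 0 ≤ t → HasDerivAt x ((x t) ^ 2 / 2 + h t) t)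
    (hbdd : ∃ C : ℝ, ∀ t : ℝ, 0 ≤ t → |x t| ≤ C) :
    L ≤ 0 ∧ ∃ xinf : ℝ, Tendsto x atTop (nhds xinf) ∧ xinf ^ 2 / 2 + L = 0 := by
  obtain ⟨C, hC⟩ := hbdd
  set g : ℝ → ℝ := fun t => x t ^ 2 / 2 + h t with hg_def
  have hdg : ∀ t, (0:ℝ) ≤ t → HasDerivAt x (g t) t := hode
  -- Part 1 : L ≤ 0
  have hL : L ≤ 0 := by
    by_contra hL'
    push_neg at hL'
    have hev : ∀ᶠ t in atTop, L / 2 ≤ h t :=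
      hlim.eventually (eventually_ge_nhds (by linarith))
    obtain ⟨T0, hT0⟩ := eventually_atTop.1 hev
    refine nogrow17 x g C (max T0 0) (L / 2) (by linarith) (le_max_right _ _) hC
      (fun t ht => hdg t ((le_max_right _ _).trans ht)) (fun t ht => ?_)
    have h1 : L / 2 ≤ h t := hT0 t ((le_max_left _ _).trans ht)
    have h2 : 0 ≤ x t ^ 2 / 2 := by positivity
    simp only [hg_def]
    linarith
  refine ⟨hL, ?_⟩
  -- boundedness facts
  have hbdd_le : IsBoundedUnder (· ≤ ·) atTop x :=
    ⟨C, eventually_map.2 ((eventually_ge_atTop (0:ℝ)).mono fun t ht => (abs_le.1 (hC t ht)).2)⟩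
  have hbdd_ge : IsBoundedUnder (· ≥ ·) atTop x :=
    ⟨-C, eventually_map.2 ((eventually_ge_atTop (0:ℝ)).mono fun t ht => (abs_le.1 (hC t ht)).1)⟩
  set M := limsup x atTop with hM_def
  set m := liminf x atTop with hm_def
  -- Key : any level strictly between m and M is a zero of c²/2 + L
  have hkey : ∀ c, m < c → c < M → c ^ 2 / 2 + L = 0 := by
    intro c hmc hcM
    by_contra hne
    have habove : ∃ᶠ t in atTop, c < x t :=
      frequently_lt_of_lt_limsup hbdd_ge.isCoboundedUnder_le hcM
    have hbelow : ∃ᶠ t in atTop, x t < c :=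
      frequently_lt_of_liminf_lt hbdd_le.isCoboundedUnder_ge hmc
    set δ := c ^ 2 / 2 + L with hδ_def
    clear_value δ
    rcases lt_or_gt_of_ne hne with hδneg | hδpos
    · -- δ < 0 : apply the crossing lemma to -x
      have hev : ∀ᶠ t in atTop, h t < L - δ / 2 :=
        hlim.eventually (eventually_lt_nhds (by linarith))
      obtain ⟨T0, hT0⟩ := eventually_atTop.1 hev
      refine cross17 (fun t => -x t) (fun t => -g t) (-c) (max T0 0)
        (fun t ht => (hdg t ((le_max_right _ _).trans ht)).neg)
        (fun t ht hxt => ?_)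
        (hbelow.mono fun t ht => by simpa using ht)
        (habove.mono fun t ht => by simpa using ht)
      have hxtc : x t = c := by simpa using neg_injective hxt
      have h1 : h t < L - δ / 2 := hT0 t ((le_max_left _ _).trans ht)
      have h2 : g t = c ^ 2 / 2 + h t := by simp [hg_def, hxtc]
      simp only [neg_pos, h2]
      linarith
    · -- δ > 0
      have hev : ∀ᶠ t in atTop, L - δ / 2 < h t :=
        hlim.eventually (eventually_gt_nhds (by linarith))
      obtain ⟨T0, hT0⟩ := eventually_atTop.1 hev
      refine cross17 x g c (max T0 0)
        (fun t ht => hdg t ((le_max_right _ _).trans ht))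
        (fun t ht hxt => ?_) habove hbelow
      have h1 : L - δ / 2 < h t := hT0 t ((le_max_left _ _).trans ht)
      have h2 : g t = c ^ 2 / 2 + h t := by simp [hg_def, hxt]
      rw [h2]
      linarith
  -- m = M
  have hmM : m = M := by
    by_contra hne
    have hlt : m < M := lt_of_le_of_ne (liminf_le_limsup hbdd_le hbdd_ge) hne
    set c1 := m + (M - m) / 4 with hc1
    set c2 := m + (M - m) / 2 with hc2
    set c3 := m + 3 * (M - m) / 4 with hc3
    have e1 := hkey c1 (by simp [hc1]; linarith) (by simp [hc1]; linarith)
    have e2 := hkey c2 (by simp [hc2]; linarith) (by simp [hc2]; linarith)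
    have e3 := hkey c3 (by simp [hc3]; linarith) (by simp [hc3]; linarith)
    have h12 : (c2 - c1) * (c2 + c1) = 0 := by linear_combination (2:ℝ) * e2 - 2 * e1
    have h13 : (c3 - c1) * (c3 + c1) = 0 := by linear_combination (2:ℝ) * e3 - 2 * e1
    have hc21 : c2 - c1 ≠ 0 := by simp only [hc1, hc2]; intro hh; nlinarith
    have hc31 : c3 - c1 ≠ 0 := by simp only [hc1, hc3]; intro hh; nlinarith
    have hs2 : c2 + c1 = 0 := (mul_eq_zero.1 h12).resolve_left hc21
    have hs3 : c3 + c1 = 0 := (mul_eq_zero.1 h13).resolve_left hc31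
    have : c2 = c3 := by linarith
    simp only [hc2, hc3] at this
    nlinarith
  -- convergence
  have htend : Tendsto x atTop (𝓝 m) := tendsto_of_liminf_eq_limsup rfl hmM.symm hbdd_le hbdd_ge
  refine ⟨m, htend, ?_⟩
  -- m²/2 + L = 0
  by_contra hd0
  set d := m ^ 2 / 2 + L with hd_def
  have hgt : Tendsto g atTop (𝓝 d) := by
    simpa [hg_def, hd_def] using ((htend.pow 2).div_const 2).add hlim
  clear_value d
  rcases lt_or_gt_of_ne hd0 with hneg | hpos
  · -- d < 0 : -x grows linearly
    have hev : ∀ᶠ t in atTop, g t ≤ d / 2 :=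
      hgt.eventually (eventually_le_nhds (by linarith))
    obtain ⟨T0, hT0⟩ := eventually_atTop.1 hev
    exact nogrow17 (fun t => -x t) (fun t => -g t) C (max T0 0) (-(d / 2)) (by linarith)
      (le_max_right _ _) (fun t ht => by simpa [abs_neg] using hC t ht)
      (fun t ht => (hdg t ((le_max_right _ _).trans ht)).neg)
      (fun t ht => by have := hT0 t ((le_max_left _ _).trans ht); linarith)
  · -- d > 0 : x grows linearly
    have hev : ∀ᶠ t in atTop, d / 2 ≤ g t :=
      hgt.eventually (eventually_ge_nhds (by linarith))
    obtain ⟨T0, hT0⟩ := eventually_atTop.1 hev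
    exact nogrow17 x g C (max T0 0) (d / 2) (by linarith) (le_max_right _ _) hC
      (fun t ht => hdg t ((le_max_right _ _).trans ht))
      (fun t ht => hT0 t ((le_max_left _ _).trans ht))
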